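/- Fix μ ∈ ℝ, D > 0, V ∈ ℝ with μV ≠ 0, V_x ∈ ℝ, and α ∈ [0,1]. For h > 0 set Pe(h) = (μ/D)V·h, Q(h) = (μ/D)V_x·h²/2, Pe⁺(h) = Pe(h) − αQ(h) and P(h) = Pe(h)/2 − αQ(h)/4. Then the function h ↦ [(1 − Pe⁺(h)/2 − (1 + αQ(h)/2)·exp(−P(h)))/(Pe⁺(h)·((1 + αQ(h))·exp(−Pe(h)) − 1))] / W̃(−Pe⁺(h), αQ(h)/4) tends to 1 as h → 0 from the right, where W̃(z,q) = (exp(z/2 + q) − 1 − z/2)/(z·(exp(z) − 1)) for z ≠ 0. -/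
import Mathlib

open Filter Real Topology

/-- `W̃(z,q) = (exp(z/2 + q) − 1 − z/2) / (z (exp z − 1))` (for `z ≠ 0`). -/
noncomputable def Wtilde (z q : ℝ) : ℝ :=
  (Real.exp (z / 2 + q) - 1 - z / 2) / (z * (Real.exp z - 1))

lemma abs_le_one_ev : ∀ᶠ t : ℝ in 𝓝[≠] 0, |t| ≤ 1 := by
  filter_upwards [nhdsWithin_le_nhds (Metric.ball_mem_nhds (0:ℝ) one_pos)] with t ht
  simpa [Real.dist_eq] using (Metric.mem_ball.mp ht).le

lemma ne_zero_ev : ∀ᶠ t : ℝ in 𝓝[≠] (0:ℝ), t ≠ 0 :=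
  eventually_mem_nhdsWithin

lemma abs_tendsto_zero : Filter.Tendsto (fun t : ℝ => |t|) (𝓝[≠] 0) (𝓝 0) := by
  have : Filter.Tendsto (fun t : ℝ => |t|) (𝓝 0) (𝓝 0) := by
    simpa using continuous_abs.tendsto (0:ℝ)
  exact this.mono_left nhdsWithin_le_nhds

lemma exp_taylor1 : Filter.Tendsto (fun t : ℝ => (Real.exp t - 1) / t) (𝓝[≠] 0) (𝓝 1) := by
  have key : Filter.Tendsto (fun t : ℝ => (Real.exp t - 1) / t - 1) (𝓝[≠] 0) (𝓝 0) := by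
    apply squeeze_zero_norm' (a := fun t : ℝ => 1 * |t|)
    · filter_upwards [abs_le_one_ev, ne_zero_ev] with t h1 h0
      have hb := Real.abs_exp_sub_one_sub_id_le h1
      have ht2 : |t| ≠ 0 := abs_ne_zero.mpr h0
      have : (Real.exp t - 1) / t - 1 = (Real.exp t - 1 - t) / t := by
        field_simp
      rw [this, Real.norm_eq_abs, abs_div]
      rw [div_le_iff₀ (lt_of_le_of_ne (abs_nonneg t) (Ne.symm ht2))]
      calc |Real.exp t - 1 - t| ≤ t ^ 2 := hb
        _ = 1 * |t| * |t| := by rw [← sq_abs]; ring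
    · simpa using abs_tendsto_zero.const_mul 1
  have := key.add_const 1
  simpa using this

lemma exp_taylor2 : Filter.Tendsto (fun t : ℝ => (Real.exp t - 1 - t) / t ^ 2) (𝓝[≠] 0) (𝓝 (1/2)) := by
  have key : Filter.Tendsto (fun t : ℝ => (Real.exp t - 1 - t) / t ^ 2 - 1/2) (𝓝[≠] 0) (𝓝 0) := by
    apply squeeze_zero_norm' (a := fun t : ℝ => (2/9) * |t|)
    · filter_upwards [abs_le_one_ev, ne_zero_ev] with t h1 h0
      have hb := Real.exp_bound h1 (n := 3) (by norm_num)
      have hsum : (∑ m ∈ Finset.range 3, t ^ m / (m.factorial : ℝ)) = 1 + t + t^2/2 := by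
        norm_num [Finset.sum_range_succ]
      rw [hsum] at hb
      have ht2 : (0:ℝ) < t ^ 2 := by positivity
      have : (Real.exp t - 1 - t) / t ^ 2 - 1/2 = (Real.exp t - (1 + t + t^2/2)) / t ^ 2 := by
        field_simp; ring
      rw [this, Real.norm_eq_abs, abs_div, abs_of_pos ht2, div_le_iff₀ ht2]
      norm_num [Nat.factorial] at hb
      calc |Real.exp t - (1 + t + t^2/2)| ≤ |t| ^ 3 * (2 / 9) := hb
        _ = 2/9 * |t| * t ^ 2 := by
              rw [show |t|^3 = |t| * |t|^2 by ring, sq_abs]; ring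
    · simpa using abs_tendsto_zero.const_mul (2/9 : ℝ)
  have := key.add_const (1/2)
  simpa using this

lemma exp_taylor3 : Filter.Tendsto (fun t : ℝ => (Real.exp t - 1 - t - t^2/2) / t ^ 3) (𝓝[≠] 0) (𝓝 (1/6)) := by
  have key : Filter.Tendsto (fun t : ℝ => (Real.exp t - 1 - t - t^2/2) / t ^ 3 - 1/6) (𝓝[≠] 0) (𝓝 0) := by
    apply squeeze_zero_norm' (a := fun t : ℝ => (5/96) * |t|)
    · filter_upwards [abs_le_one_ev, ne_zero_ev] with t h1 h0
      have hb := Real.exp_bound h1 (n := 4) (by norm_num)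
      have hsum : (∑ m ∈ Finset.range 4, t ^ m / (m.factorial : ℝ)) = 1 + t + t^2/2 + t^3/6 := by
        norm_num [Finset.sum_range_succ, Nat.factorial]
      rw [hsum] at hb
      have ht3 : (0:ℝ) < |t| ^ 3 := by positivity
      have heq : (Real.exp t - 1 - t - t^2/2) / t ^ 3 - 1/6 = (Real.exp t - (1 + t + t^2/2 + t^3/6)) / t ^ 3 := by
        field_simp; ring
      rw [heq, Real.norm_eq_abs, abs_div, abs_pow, div_le_iff₀ ht3]
      norm_num [Nat.factorial] at hb
      calc |Real.exp t - (1 + t + t^2/2 + t^3/6)| ≤ |t| ^ 4 * (5 / 96) := hb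
        _ = 5/96 * |t| * |t| ^ 3 := by ring
    · simpa using abs_tendsto_zero.const_mul (5/96 : ℝ)
  have := key.add_const (1/6)
  simpa using this

lemma cancel2 (A U h : ℝ) (hU : U ≠ 0) : (A / U^2) * (U/h)^2 = A / h^2 := by
  rcases eq_or_ne h 0 with rfl | hh
  · simp
  · field_simp

lemma cancel3 (A U h : ℝ) (hU : U ≠ 0) : (A / U^3) * (U/h)^3 = A / h^3 := by
  rcases eq_or_ne h 0 with rfl | hh
  · simp
  · field_simp

lemma final_alg (E1 E2 E3 E4 P q s : ℝ) (hP : P ≠ 0) (hD : (1 + s) * E4 - 1 ≠ 0)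
    (hW : E1 * E2 - 1 + P / 2 ≠ 0) :
    (E3 - 1) / ((1 + s) * E4 - 1) *
        (1 - E1 * (E2 - 1 - q) / (E1 * E2 - 1 + P / 2)) =
      (1 - P / 2 - (1 + q) * E1) / (P * ((1 + s) * E4 - 1)) /
        ((E1 * E2 - 1 - -P / 2) / (-P * (E3 - 1))) := by
  rw [show E1 * E2 - 1 - -P / 2 = E1 * E2 - 1 + P / 2 by ring]
  rw [one_sub_div hW, div_mul_div_comm, div_div_eq_mul_div, div_mul_eq_mul_div, div_div]
  rw [div_eq_div_iff (mul_ne_zero hD hW) (mul_ne_zero (mul_ne_zero hP hD) hW)]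
  ring

set_option maxHeartbeats 1000000 in
lemma main_aux (c a : ℝ) (hc : c ≠ 0) :
    Filter.Tendsto (fun h : ℝ =>
      ((1 - (c*h - a*h^2/2)/2 - (1 + a*h^2/4) * Real.exp (-(c*h/2 - a*h^2/8))) /
        ((c*h - a*h^2/2) * ((1 + a*h^2/2) * Real.exp (-(c*h)) - 1))) /
        Wtilde (-(c*h - a*h^2/2)) (a*h^2/8))
      (𝓝[>] (0:ℝ)) (𝓝 1) := by
  have hpos : ∀ᶠ h : ℝ in 𝓝[>] (0:ℝ), 0 < h := eventually_mem_nhdsWithin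
  -- c - a h/2 → c
  have hcma : Filter.Tendsto (fun h : ℝ => c - a*h/2) (𝓝[>] (0:ℝ)) (𝓝 c) := by
    have : Filter.Tendsto (fun h : ℝ => c - a*h/2) (𝓝 (0:ℝ)) (𝓝 (c - a*0/2)) :=
      ((continuous_const.sub ((continuous_const.mul continuous_id).div_const 2)).tendsto 0)
    simpa using this.mono_left nhdsWithin_le_nhds
  have hPep_ne : ∀ᶠ h : ℝ in 𝓝[>] (0:ℝ), c*h - a*h^2/2 ≠ 0 := by
    filter_upwards [hpos, hcma.eventually_ne hc] with h h0 h1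
    have : c*h - a*h^2/2 = h * (c - a*h/2) := by ring
    rw [this]; exact mul_ne_zero h0.ne' h1
  have hPep_to0 : Filter.Tendsto (fun h : ℝ => -(c*h - a*h^2/2)) (𝓝[>] (0:ℝ)) (𝓝[≠] (0:ℝ)) := by
    rw [tendsto_nhdsWithin_iff]
    constructor
    · have : Filter.Tendsto (fun h : ℝ => -(c*h - a*h^2/2)) (𝓝 (0:ℝ))
          (𝓝 (-(c*0 - a*0^2/2))) := by
        apply Continuous.tendsto; fun_prop
      simpa using this.mono_left nhdsWithin_le_nhds
    · filter_upwards [hPep_ne] with h h1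
      simpa using neg_ne_zero.mpr h1
  -- u facts
  have hmc2 : -c/2 ≠ (0:ℝ) := by
    simpa using div_ne_zero (neg_ne_zero.mpr hc) (two_ne_zero (α := ℝ))
  have hmc : Filter.Tendsto (fun h : ℝ => -c/2 + 3*a*h/8) (𝓝[>] (0:ℝ)) (𝓝 (-c/2)) := by
    have : Filter.Tendsto (fun h : ℝ => -c/2 + 3*a*h/8) (𝓝 (0:ℝ)) (𝓝 (-c/2 + 3*a*0/8)) := by
      apply Continuous.tendsto; fun_prop
    simpa using this.mono_left nhdsWithin_le_nhds
  have hu_ne : ∀ᶠ h : ℝ in 𝓝[>] (0:ℝ), -(c*h - a*h^2/2)/2 + a*h^2/8 ≠ 0 := by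
    filter_upwards [hpos, hmc.eventually_ne hmc2] with h h0 h1
    have : -(c*h - a*h^2/2)/2 + a*h^2/8 = h * (-c/2 + 3*a*h/8) := by ring
    rw [this]; exact mul_ne_zero h0.ne' h1
  have hu_to0 : Filter.Tendsto (fun h : ℝ => -(c*h - a*h^2/2)/2 + a*h^2/8)
      (𝓝[>] (0:ℝ)) (𝓝[≠] (0:ℝ)) := by
    rw [tendsto_nhdsWithin_iff]
    constructor
    · have : Filter.Tendsto (fun h : ℝ => -(c*h - a*h^2/2)/2 + a*h^2/8) (𝓝 (0:ℝ))
          (𝓝 (-(c*0 - a*0^2/2)/2 + a*0^2/8)) := by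
        apply Continuous.tendsto; fun_prop
      simpa using this.mono_left nhdsWithin_le_nhds
    · filter_upwards [hu_ne] with h h1; simpa using h1
  have hu_div : Filter.Tendsto (fun h : ℝ => (-(c*h - a*h^2/2)/2 + a*h^2/8) / h)
      (𝓝[>] (0:ℝ)) (𝓝 (-c/2)) := by
    apply hmc.congr'
    filter_upwards [hpos] with h h0
    rw [eq_div_iff h0.ne']
    ring
  -- A := (exp(-Pep) - 1)/h → -c
  have hA : Filter.Tendsto (fun h : ℝ => (Real.exp (-(c*h - a*h^2/2)) - 1) / h)
      (𝓝[>] (0:ℝ)) (𝓝 (-c)) := by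
    have h1 : Filter.Tendsto
        (fun h : ℝ => ((Real.exp (-(c*h - a*h^2/2)) - 1) / (-(c*h - a*h^2/2))) * (-(c - a*h/2)))
        (𝓝[>] (0:ℝ)) (𝓝 (1 * (-c))) := (exp_taylor1.comp hPep_to0).mul hcma.neg
    rw [one_mul] at h1
    apply h1.congr'
    filter_upwards [hpos, hPep_ne] with h h0 h1
    have hne : -(c*h - a*h^2/2) ≠ 0 := neg_ne_zero.mpr h1
    rw [div_mul_eq_mul_div, div_eq_div_iff hne h0.ne']
    ring
  -- B := D2/h → -c
  have hch_to0 : Filter.Tendsto (fun h : ℝ => -(c*h)) (𝓝[>] (0:ℝ)) (𝓝[≠] (0:ℝ)) := by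
    rw [tendsto_nhdsWithin_iff]
    constructor
    · have : Filter.Tendsto (fun h : ℝ => -(c*h)) (𝓝 (0:ℝ)) (𝓝 (-(c*0))) := by
        apply Continuous.tendsto; fun_prop
      simpa using this.mono_left nhdsWithin_le_nhds
    · filter_upwards [hpos] with h h0
      simpa using mul_ne_zero hc h0.ne'
  have hexpch : Filter.Tendsto (fun h : ℝ => Real.exp (-(c*h))) (𝓝[>] (0:ℝ)) (𝓝 1) := by
    have : Filter.Tendsto (fun h : ℝ => Real.exp (-(c*h))) (𝓝 (0:ℝ)) (𝓝 (Real.exp (-(c*0)))) := by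
      apply Continuous.tendsto; fun_prop
    simpa using this.mono_left nhdsWithin_le_nhds
  have hah2 : Filter.Tendsto (fun h : ℝ => a*h/2) (𝓝[>] (0:ℝ)) (𝓝 0) := by
    have : Filter.Tendsto (fun h : ℝ => a*h/2) (𝓝 (0:ℝ)) (𝓝 (a*0/2)) := by
      apply Continuous.tendsto; fun_prop
    simpa using this.mono_left nhdsWithin_le_nhds
  have hB : Filter.Tendsto (fun h : ℝ => ((1 + a*h^2/2) * Real.exp (-(c*h)) - 1) / h)
      (𝓝[>] (0:ℝ)) (𝓝 (-c)) := by
    have h1 : Filter.Tendsto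
        (fun h : ℝ => ((Real.exp (-(c*h)) - 1) / (-(c*h))) * (-c) + (a*h/2) * Real.exp (-(c*h)))
        (𝓝[>] (0:ℝ)) (𝓝 (1 * (-c) + 0 * 1)) :=
      ((exp_taylor1.comp hch_to0).mul_const (-c)).add (hah2.mul hexpch)
    rw [show (1:ℝ) * (-c) + 0 * 1 = -c by ring] at h1
    apply h1.congr'
    filter_upwards [hpos] with h h0
    have hch : -(c*h) ≠ 0 := neg_ne_zero.mpr (mul_ne_zero hc h0.ne')
    rw [div_mul_eq_mul_div, div_add' _ _ _ hch, div_eq_div_iff hch h0.ne']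
    ring
  have hD2_ne : ∀ᶠ h : ℝ in 𝓝[>] (0:ℝ), (1 + a*h^2/2) * Real.exp (-(c*h)) - 1 ≠ 0 := by
    filter_upwards [hB.eventually_ne (neg_ne_zero.mpr hc)] with h hh
    intro h0
    apply hh
    rw [h0, zero_div]
  -- T1 → 1
  have hT1 : Filter.Tendsto
      (fun h : ℝ => (Real.exp (-(c*h - a*h^2/2)) - 1) / ((1 + a*h^2/2) * Real.exp (-(c*h)) - 1))
      (𝓝[>] (0:ℝ)) (𝓝 1) := by
    have h1 := hA.div hB (neg_ne_zero.mpr hc)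
    rw [div_self (neg_ne_zero.mpr hc)] at h1
    apply h1.congr'
    filter_upwards [hpos, hD2_ne] with h h0 h2
    simp only [Pi.div_apply]
    rw [div_div_div_cancel_right₀ h0.ne']
  -- E bound
  have hexpP : Filter.Tendsto (fun h : ℝ => Real.exp (-(c*h/2 - a*h^2/8))) (𝓝[>] (0:ℝ)) (𝓝 1) := by
    have : Filter.Tendsto (fun h : ℝ => Real.exp (-(c*h/2 - a*h^2/8))) (𝓝 (0:ℝ))
        (𝓝 (Real.exp (-(c*0/2 - a*0^2/8)))) := by
      apply Continuous.tendsto; fun_prop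
    simpa using this.mono_left nhdsWithin_le_nhds
  have hq_abs : Filter.Tendsto (fun h : ℝ => |a*h^2/4|) (𝓝[>] (0:ℝ)) (𝓝 0) := by
    have : Filter.Tendsto (fun h : ℝ => |a*h^2/4|) (𝓝 (0:ℝ)) (𝓝 (|a*0^2/4|)) := by
      apply Continuous.tendsto; fun_prop
    simpa using this.mono_left nhdsWithin_le_nhds
  have hEbound : ∀ᶠ h : ℝ in 𝓝[>] (0:ℝ),
      |Real.exp (-(c*h/2 - a*h^2/8)) * (Real.exp (a*h^2/4) - 1 - a*h^2/4)| ≤ a^2/8 * h^4 := by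
    filter_upwards [hexpP.eventually_le_const (by norm_num : (1:ℝ) < 2),
      hq_abs.eventually_le_const (by norm_num : (0:ℝ) < 1)] with h h2 hq1
    have hb := Real.abs_exp_sub_one_sub_id_le hq1
    rw [abs_mul, Real.abs_exp]
    calc Real.exp (-(c*h/2 - a*h^2/8)) * |Real.exp (a*h^2/4) - 1 - a*h^2/4|
        ≤ 2 * (a*h^2/4)^2 :=
          mul_le_mul h2 hb (abs_nonneg _) (by norm_num)
      _ = a^2/8 * h^4 := by ring
  have hE2 : Filter.Tendsto
      (fun h : ℝ => Real.exp (-(c*h/2 - a*h^2/8)) * (Real.exp (a*h^2/4) - 1 - a*h^2/4) / h^2)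
      (𝓝[>] (0:ℝ)) (𝓝 0) := by
    apply squeeze_zero_norm' (a := fun h : ℝ => a^2/8 * h^2)
    · filter_upwards [hpos, hEbound] with h h0 hb
      rw [Real.norm_eq_abs, abs_div, abs_of_pos (by positivity : (0:ℝ) < h^2)]
      rw [div_le_iff₀ (by positivity : (0:ℝ) < h^2)]
      calc |Real.exp (-(c*h/2 - a*h^2/8)) * (Real.exp (a*h^2/4) - 1 - a*h^2/4)|
          ≤ a^2/8 * h^4 := hb
        _ = a^2/8 * h^2 * h^2 := by ring
    · have : Filter.Tendsto (fun h : ℝ => a^2/8 * h^2) (𝓝 (0:ℝ)) (𝓝 (a^2/8 * 0^2)) := by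
        apply Continuous.tendsto; fun_prop
      simpa using this.mono_left nhdsWithin_le_nhds
  have hE3 : Filter.Tendsto
      (fun h : ℝ => Real.exp (-(c*h/2 - a*h^2/8)) * (Real.exp (a*h^2/4) - 1 - a*h^2/4) / h^3)
      (𝓝[>] (0:ℝ)) (𝓝 0) := by
    apply squeeze_zero_norm' (a := fun h : ℝ => a^2/8 * h)
    · filter_upwards [hpos, hEbound] with h h0 hb
      rw [Real.norm_eq_abs, abs_div, abs_of_pos (by positivity : (0:ℝ) < h^3)]
      rw [div_le_iff₀ (by positivity : (0:ℝ) < h^3)]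
      calc |Real.exp (-(c*h/2 - a*h^2/8)) * (Real.exp (a*h^2/4) - 1 - a*h^2/4)|
          ≤ a^2/8 * h^4 := hb
        _ = a^2/8 * h * h^3 := by ring
    · have : Filter.Tendsto (fun h : ℝ => a^2/8 * h) (𝓝 (0:ℝ)) (𝓝 (a^2/8 * 0)) := by
        apply Continuous.tendsto; fun_prop
      simpa using this.mono_left nhdsWithin_le_nhds
  -- Wn notation (as in Wtilde numerator): exp(z/2+q) - 1 - z/2 with z = -(Pep)
  -- Wn h = Real.exp (-(c*h - a*h^2/2)/2 + a*h^2/8) - 1 + (c*h - a*h^2/2)/2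
  -- key: eventual nonvanishing of Wn and E/Wn → 0
  have key : (∀ᶠ h : ℝ in 𝓝[>] (0:ℝ),
        Real.exp (-(c*h - a*h^2/2)/2 + a*h^2/8) - 1 + (c*h - a*h^2/2)/2 ≠ 0) ∧
      Filter.Tendsto (fun h : ℝ =>
        (Real.exp (-(c*h/2 - a*h^2/8)) * (Real.exp (a*h^2/4) - 1 - a*h^2/4)) /
          (Real.exp (-(c*h - a*h^2/2)/2 + a*h^2/8) - 1 + (c*h - a*h^2/2)/2))
        (𝓝[>] (0:ℝ)) (𝓝 0) := by
    rcases eq_or_ne (a + c^2) (0:ℝ) with hdeg | hdeg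
    · -- degenerate case: a = -c^2, use third order
      have ha : a = -c^2 := by linarith
      subst ha
      have hpoly : Filter.Tendsto (fun h : ℝ => 3*c^3/16 + 9*c^4/128 * h)
          (𝓝[>] (0:ℝ)) (𝓝 (3*c^3/16)) := by
        have : Filter.Tendsto (fun h : ℝ => 3*c^3/16 + 9*c^4/128 * h) (𝓝 (0:ℝ))
            (𝓝 (3*c^3/16 + 9*c^4/128 * 0)) := by
          apply Continuous.tendsto; fun_prop
        simpa using this.mono_left nhdsWithin_le_nhds
      have hWn3 : Filter.Tendsto
          (fun h : ℝ => (Real.exp (-(c*h - (-c^2)*h^2/2)/2 + (-c^2)*h^2/8) - 1 +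
            (c*h - (-c^2)*h^2/2)/2) / h^3)
          (𝓝[>] (0:ℝ)) (𝓝 (c^3/6)) := by
        have h1 : Filter.Tendsto
            (fun h : ℝ =>
              ((Real.exp (-(c*h - (-c^2)*h^2/2)/2 + (-c^2)*h^2/8) - 1 -
                  (-(c*h - (-c^2)*h^2/2)/2 + (-c^2)*h^2/8) -
                  (-(c*h - (-c^2)*h^2/2)/2 + (-c^2)*h^2/8)^2/2) /
                (-(c*h - (-c^2)*h^2/2)/2 + (-c^2)*h^2/8)^3) *
                ((-(c*h - (-c^2)*h^2/2)/2 + (-c^2)*h^2/8) / h)^3 +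
              (3*c^3/16 + 9*c^4/128 * h))
            (𝓝[>] (0:ℝ)) (𝓝 (1/6 * (-c/2)^3 + 3*c^3/16)) :=
          ((exp_taylor3.comp hu_to0).mul (hu_div.pow 3)).add hpoly
        rw [show (1:ℝ)/6 * (-c/2)^3 + 3*c^3/16 = c^3/6 by ring] at h1
        apply h1.congr'
        filter_upwards [hpos, hu_ne] with h h0 h1
        rw [cancel3 _ _ _ h1]
        field_simp [h0.ne']
        ring
      have hc3 : c^3/6 ≠ (0:ℝ) := div_ne_zero (pow_ne_zero 3 hc) (by norm_num)
      constructor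
      · filter_upwards [hWn3.eventually_ne hc3] with h hh
        intro h0
        apply hh
        rw [h0, zero_div]
      · have h2 := hE3.div hWn3 hc3
        rw [zero_div] at h2
        apply h2.congr'
        filter_upwards [hpos, hWn3.eventually_ne hc3] with h h0 hne
        have hWnne : Real.exp (-(c*h - (-c^2)*h^2/2)/2 + (-c^2)*h^2/8) - 1 +
            (c*h - (-c^2)*h^2/2)/2 ≠ 0 := by
          intro hz; apply hne; rw [hz, zero_div]
        simp only [Pi.div_apply]
        rw [div_div_div_cancel_right₀ (pow_ne_zero 3 h0.ne')]
    · -- nondegenerate case: second order suffices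
      have hWn2 : Filter.Tendsto
          (fun h : ℝ => (Real.exp (-(c*h - a*h^2/2)/2 + a*h^2/8) - 1 + (c*h - a*h^2/2)/2) / h^2)
          (𝓝[>] (0:ℝ)) (𝓝 ((a + c^2)/8)) := by
        have hconst : Filter.Tendsto (fun _ : ℝ => a/8) (𝓝[>] (0:ℝ)) (𝓝 (a/8)) :=
          tendsto_const_nhds
        have h1 : Filter.Tendsto
            (fun h : ℝ =>
              ((Real.exp (-(c*h - a*h^2/2)/2 + a*h^2/8) - 1 -
                  (-(c*h - a*h^2/2)/2 + a*h^2/8)) /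
                (-(c*h - a*h^2/2)/2 + a*h^2/8)^2) *
                ((-(c*h - a*h^2/2)/2 + a*h^2/8) / h)^2 + a/8)
            (𝓝[>] (0:ℝ)) (𝓝 (1/2 * (-c/2)^2 + a/8)) :=
          ((exp_taylor2.comp hu_to0).mul (hu_div.pow 2)).add hconst
        rw [show (1:ℝ)/2 * (-c/2)^2 + a/8 = (a + c^2)/8 by ring] at h1
        apply h1.congr'
        filter_upwards [hpos, hu_ne] with h h0 h1
        rw [cancel2 _ _ _ h1]
        field_simp [h0.ne']
        ring
      have hL : (a + c^2)/8 ≠ (0:ℝ) := div_ne_zero hdeg (by norm_num)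
      constructor
      · filter_upwards [hWn2.eventually_ne hL] with h hh
        intro h0
        apply hh
        rw [h0, zero_div]
      · have h2 := hE2.div hWn2 hL
        rw [zero_div] at h2
        apply h2.congr'
        filter_upwards [hpos, hWn2.eventually_ne hL] with h h0 hne
        have hWnne : Real.exp (-(c*h - a*h^2/2)/2 + a*h^2/8) - 1 + (c*h - a*h^2/2)/2 ≠ 0 := by
          intro hz; apply hne; rw [hz, zero_div]
        simp only [Pi.div_apply]
        rw [div_div_div_cancel_right₀ (pow_ne_zero 2 h0.ne')]
  obtain ⟨hWn_ne, hEW⟩ := key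
  -- final assembly
  have hfinal : Filter.Tendsto
      (fun h : ℝ =>
        ((Real.exp (-(c*h - a*h^2/2)) - 1) / ((1 + a*h^2/2) * Real.exp (-(c*h)) - 1)) *
          (1 - (Real.exp (-(c*h/2 - a*h^2/8)) * (Real.exp (a*h^2/4) - 1 - a*h^2/4)) /
            (Real.exp (-(c*h - a*h^2/2)/2 + a*h^2/8) - 1 + (c*h - a*h^2/2)/2)))
      (𝓝[>] (0:ℝ)) (𝓝 1) := by
    have hone : Filter.Tendsto (fun _ : ℝ => (1:ℝ)) (𝓝[>] (0:ℝ)) (𝓝 1) := tendsto_const_nhds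
    have := hT1.mul (hone.sub hEW)
    simpa using this
  apply hfinal.congr'
  filter_upwards [hpos, hPep_ne, hD2_ne, hWn_ne] with h h0 h1 h2 h3
  simp only [Wtilde]
  rw [show Real.exp (-(c*h - a*h^2/2) / 2 + a*h^2/8)
      = Real.exp (-(c*h/2 - a*h^2/8)) * Real.exp (a*h^2/4) by
    rw [← Real.exp_add]; congr 1; ring] at h3 ⊢
  generalize hg1 : Real.exp (-(c*h/2 - a*h^2/8)) = E1 at h3 ⊢
  generalize hg2 : Real.exp (a*h^2/4) = E2 at h3 ⊢
  generalize hg3 : Real.exp (-(c*h - a*h^2/2)) = E3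
  generalize hg4 : Real.exp (-(c*h)) = E4 at h2 ⊢
  exact final_alg E1 E2 E3 E4 (c*h - a*h^2/2) (a*h^2/4) (a*h^2/2) h1 h2 h3

theorem asymptotic_sj_coefficient_plus (μ D V Vx α : ℝ)
    (hD : D > 0) (hμV : μ * V ≠ 0) (hα : α ∈ Set.Icc (0:ℝ) 1) :
    Filter.Tendsto
      (fun h : ℝ =>
        let Pe := (μ / D) * V * h
        let Q := (μ / D) * Vx * h ^ 2 / 2
        let Pep := Pe - α * Q
        let P := Pe / 2 - α * Q / 4
        ((1 - Pep / 2 - (1 + α * Q / 2) * Real.exp (-P)) /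
          (Pep * ((1 + α * Q) * Real.exp (-Pe) - 1))) /
          Wtilde (-Pep) (α * Q / 4))
      (nhdsWithin 0 (Set.Ioi 0)) (nhds 1) := by
  have hc : (μ / D) * V ≠ 0 := by
    rw [div_mul_eq_mul_div]
    exact div_ne_zero hμV hD.ne'
  have := main_aux ((μ / D) * V) (α * ((μ / D) * Vx)) hc
  apply this.congr
  intro h
  dsimp only
  rw [show α * (μ / D * Vx) * h ^ 2 / 8 = α * (μ / D * Vx * h ^ 2 / 2) / 4 from by ring,
    show α * (μ / D * Vx) * h ^ 2 / 4 = α * (μ / D * Vx * h ^ 2 / 2) / 2 from by ring,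
    show α * (μ / D * Vx) * h ^ 2 / 2 = α * (μ / D * Vx * h ^ 2 / 2) from by ring]
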